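/- Under the stated setup, let λ ∈ ℝ^n with Z_λ finite, and suppose γ̂ ∈ ℝ^n is a global maximizer of γ ↦ A(γ, λ) with Z_{γ̂+λ} finite, with M(λ) := γ̂ + λ. Assume for every direction γ ∈ ℝ^n the derivatives d/dt A(tγ, λ)|_{t=0} and d/dt L(λ + tγ)|_{t=0} exist and are equal (termwise differentiation of the defining series being justified). Then the following are equivalent: (i) L(M(λ)) = L(λ); (ii) λ is a fixed point of M, i.e. γ = 0 maximizes A(γ, λ); (iii) λ is a critical point of L, i.e. for every γ ∈ ℝ^n, d/dt L(λ + tγ)|_{t=0} = 0. -/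

import Mathlib

open scoped Topology


/- Common setup: log-linear models over proof trees (complete data X) and
   queries (incomplete data Y). -/

variable {X Y : Type*}

/-- `ν_#(x) = ∑ i, ν_i(x)`. -/
def nuSharp {n : ℕ} (ν : Fin n → X → ℕ) (x : X) : ℕ := ∑ i, ν i x

/-- weighted property sum `λ·ν(x)`. -/
noncomputable def wdot {n : ℕ} (l : Fin n → ℝ) (ν : Fin n → X → ℕ) (x : X) : ℝ :=
  ∑ i, l i * (ν i x : ℝ)

/-- normalizing constant `Z_λ`. -/
noncomputable def Zpart (p0 : X → ℝ) {n : ℕ} (ν : Fin n → X → ℕ) (l : Fin n → ℝ) : ℝ :=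
  ∑' x : X, Real.exp (wdot l ν x) * p0 x

/-- log-linear distribution `p_λ(x)`. -/
noncomputable def pLL (p0 : X → ℝ) {n : ℕ} (ν : Fin n → X → ℕ) (l : Fin n → ℝ) (x : X) : ℝ :=
  (Zpart p0 ν l)⁻¹ * Real.exp (wdot l ν x) * p0 x

/-- incomplete-data probability `p_λ(y) = ∑_{x ∈ X(y)} p_λ(x)`. -/
noncomputable def pLLY (Yf : X → Y) (p0 : X → ℝ) {n : ℕ} (ν : Fin n → X → ℕ)
    (l : Fin n → ℝ) (y : Y) : ℝ :=
  ∑' x : {x : X // Yf x = y}, pLL p0 ν l x.1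

/-- incomplete-data log-likelihood `L(λ) = ∑_{y ∈ 𝒴} ln p_λ(y)`. -/
noncomputable def LL (Yf : X → Y) (p0 : X → ℝ) {n : ℕ} (ν : Fin n → X → ℕ)
    (𝒴 : Multiset Y) (l : Fin n → ℝ) : ℝ :=
  (𝒴.map fun y => Real.log (pLLY Yf p0 ν l y)).sum

/-- expectation `p_λ[f]`. -/
noncomputable def pExp (p0 : X → ℝ) {n : ℕ} (ν : Fin n → X → ℕ) (l : Fin n → ℝ)
    (f : X → ℝ) : ℝ :=
  ∑' x : X, pLL p0 ν l x * f x

/-- conditional expectation `k_λ[f]` given observed `y`. -/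
noncomputable def kExp (Yf : X → Y) (p0 : X → ℝ) {n : ℕ} (ν : Fin n → X → ℕ)
    (l : Fin n → ℝ) (y : Y) (f : X → ℝ) : ℝ :=
  ∑' x : {x : X // Yf x = y}, (pLL p0 ν l x.1 / pLLY Yf p0 ν l y) * f x.1

/-- auxiliary function
`A(γ,λ) = ∑_{y∈𝒴} (1 + k_λ[γ·ν] − p_λ[∑ i, ν̄_i e^{γ_i ν_#}])`. -/
noncomputable def Aaux (Yf : X → Y) (p0 : X → ℝ) {n : ℕ} (ν : Fin n → X → ℕ)
    (𝒴 : Multiset Y) (γ l : Fin n → ℝ) : ℝ :=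
  (𝒴.map fun y =>
    1 + kExp Yf p0 ν l y (fun x => wdot γ ν x)
      - pExp p0 ν l (fun x =>
          ∑ i, ((ν i x : ℝ) / (nuSharp ν x : ℝ)) * Real.exp (γ i * (nuSharp ν x : ℝ)))).sum

section helper
variable {X : Type*} {n : ℕ}

lemma wdot_add (a b : Fin n → ℝ) (ν : Fin n → X → ℕ) (x : X) :
    wdot (a + b) ν x = wdot a ν x + wdot b ν x := by
  simp [wdot, add_mul, Finset.sum_add_distrib]

lemma wdot_smul (t : ℝ) (γ : Fin n → ℝ) (ν : Fin n → X → ℕ) (x : X) :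
    wdot (t • γ) ν x = t * wdot γ ν x := by
  simp [wdot, Finset.mul_sum, mul_assoc]

lemma wdot_zero (ν : Fin n → X → ℕ) (x : X) : wdot (0 : Fin n → ℝ) ν x = 0 := by
  simp [wdot]

lemma nuSharp_cast_pos {ν : Fin n → X → ℕ} {x : X} (h : 1 ≤ nuSharp ν x) :
    (0 : ℝ) < (nuSharp ν x : ℝ) := by exact_mod_cast h

lemma sum_nubar {ν : Fin n → X → ℕ} {x : X} (h : 1 ≤ nuSharp ν x) :
    ∑ i, ((ν i x : ℝ) / (nuSharp ν x : ℝ)) = 1 := by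
  rw [← Finset.sum_div]
  have : ∑ i, ((ν i x : ℝ)) = (nuSharp ν x : ℝ) := by
    rw [nuSharp]; push_cast; ring
  rw [this, div_self (nuSharp_cast_pos h).ne']

lemma nubar_nonneg (ν : Fin n → X → ℕ) (x : X) (i : Fin n) :
    0 ≤ (ν i x : ℝ) / (nuSharp ν x : ℝ) := by positivity

/-- finite Jensen for exp: `e^{γ·ν(x)} ≤ ∑ i ν̄_i e^{γ_i ν#(x)}`. -/
lemma exp_wdot_le {ν : Fin n → X → ℕ} {x : X} (h : 1 ≤ nuSharp ν x) (γ : Fin n → ℝ) :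
    Real.exp (wdot γ ν x) ≤
      ∑ i, ((ν i x : ℝ) / (nuSharp ν x : ℝ)) * Real.exp (γ i * (nuSharp ν x : ℝ)) := by
  have hS : (0:ℝ) < (nuSharp ν x : ℝ) := nuSharp_cast_pos h
  have := convexOn_exp.map_sum_le (t := Finset.univ)
    (w := fun i => (ν i x : ℝ) / (nuSharp ν x : ℝ))
    (p := fun i => γ i * (nuSharp ν x : ℝ))
    (fun i _ => nubar_nonneg ν x i) (sum_nubar h) (fun i _ => Set.mem_univ _)
  simp only [smul_eq_mul] at this
  have hw : ∑ i, ((ν i x : ℝ) / (nuSharp ν x : ℝ)) * (γ i * (nuSharp ν x : ℝ))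
      = wdot γ ν x := by
    rw [wdot]
    refine Finset.sum_congr rfl fun i _ => ?_
    field_simp
  rw [hw] at this
  exact this

/-- interpolation for exp sums: pointwise convexity. -/
lemma fs_le_interp {ν : Fin n → X → ℕ} {x : X} (h : 1 ≤ nuSharp ν x) (γ : Fin n → ℝ)
    {s : ℝ} (hs0 : 0 ≤ s) (hs1 : s ≤ 1) :
    ∑ i, ((ν i x : ℝ) / (nuSharp ν x : ℝ)) * Real.exp ((s • γ) i * (nuSharp ν x : ℝ))
      ≤ (1 - s) + s * ∑ i, ((ν i x : ℝ) / (nuSharp ν x : ℝ)) * Real.exp (γ i * (nuSharp ν x : ℝ)) := by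
  have key : ∀ i : Fin n,
      ((ν i x : ℝ) / (nuSharp ν x : ℝ)) * Real.exp ((s • γ) i * (nuSharp ν x : ℝ))
      ≤ ((ν i x : ℝ) / (nuSharp ν x : ℝ)) * ((1 - s) + s * Real.exp (γ i * (nuSharp ν x : ℝ))) := by
    intro i
    refine mul_le_mul_of_nonneg_left ?_ (nubar_nonneg ν x i)
    have hc := convexOn_exp.2 (Set.mem_univ (0:ℝ)) (Set.mem_univ (γ i * (nuSharp ν x : ℝ)))
      (by linarith : (0:ℝ) ≤ 1 - s) hs0 (by ring)
    simp only [smul_eq_mul, mul_zero, zero_add, Real.exp_zero, mul_one] at hc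
    calc Real.exp ((s • γ) i * (nuSharp ν x : ℝ))
        = Real.exp ((1-s) * 0 + s * (γ i * (nuSharp ν x : ℝ))) := by
          simp [Pi.smul_apply, smul_eq_mul]; ring_nf
      _ ≤ (1-s) + s * Real.exp (γ i * (nuSharp ν x : ℝ)) := by
          simpa [mul_zero, zero_add, Real.exp_zero, mul_one] using hc
  calc ∑ i, ((ν i x : ℝ) / (nuSharp ν x : ℝ)) * Real.exp ((s • γ) i * (nuSharp ν x : ℝ))
      ≤ ∑ i, ((ν i x : ℝ) / (nuSharp ν x : ℝ)) * ((1 - s) + s * Real.exp (γ i * (nuSharp ν x : ℝ))) :=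
        Finset.sum_le_sum fun i _ => key i
    _ = (1 - s) + s * ∑ i, ((ν i x : ℝ) / (nuSharp ν x : ℝ)) * Real.exp (γ i * (nuSharp ν x : ℝ)) := by
        simp only [mul_add, Finset.sum_add_distrib, ← Finset.sum_mul, sum_nubar h, one_mul]
        rw [Finset.mul_sum]
        congr 1
        refine Finset.sum_congr rfl fun i _ => by ring

end helper

section basics
variable {X Y : Type*} {n : ℕ}

lemma Zpart_nonneg (p0 : X → ℝ) (hp0 : ∀ x, 0 < p0 x) (ν : Fin n → X → ℕ) (l : Fin n → ℝ) :
    0 ≤ Zpart p0 ν l :=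
  tsum_nonneg fun x => le_of_lt (mul_pos (Real.exp_pos _) (hp0 x))

lemma Zpart_pos [Nonempty X] (p0 : X → ℝ) (hp0 : ∀ x, 0 < p0 x) (ν : Fin n → X → ℕ)
    {l : Fin n → ℝ} (hZ : Summable fun x : X => Real.exp (wdot l ν x) * p0 x) :
    0 < Zpart p0 ν l :=
  Summable.tsum_pos hZ (fun x => le_of_lt (mul_pos (Real.exp_pos _) (hp0 x)))
    (Classical.arbitrary X) (mul_pos (Real.exp_pos _) (hp0 _))

lemma pLL_nonneg (p0 : X → ℝ) (hp0 : ∀ x, 0 < p0 x) (ν : Fin n → X → ℕ) (l : Fin n → ℝ)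
    (x : X) : 0 ≤ pLL p0 ν l x := by
  have h := Zpart_nonneg p0 hp0 ν l
  exact mul_nonneg (mul_nonneg (inv_nonneg.2 h) (Real.exp_pos _).le) (hp0 x).le

lemma pLL_pos [Nonempty X] (p0 : X → ℝ) (hp0 : ∀ x, 0 < p0 x) (ν : Fin n → X → ℕ)
    {l : Fin n → ℝ} (hZ : Summable fun x : X => Real.exp (wdot l ν x) * p0 x) (x : X) :
    0 < pLL p0 ν l x := by
  have h := Zpart_pos p0 hp0 ν hZ
  exact mul_pos (mul_pos (inv_pos.2 h) (Real.exp_pos _)) (hp0 x)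

lemma summable_pLL (p0 : X → ℝ) (ν : Fin n → X → ℕ) {l : Fin n → ℝ}
    (hZ : Summable fun x : X => Real.exp (wdot l ν x) * p0 x) :
    Summable (pLL p0 ν l) := by
  refine (hZ.mul_left (Zpart p0 ν l)⁻¹).congr fun x => ?_
  rw [pLL, mul_assoc]

lemma tsum_pLL [Nonempty X] (p0 : X → ℝ) (hp0 : ∀ x, 0 < p0 x) (ν : Fin n → X → ℕ)
    {l : Fin n → ℝ} (hZ : Summable fun x : X => Real.exp (wdot l ν x) * p0 x) :
    ∑' x : X, pLL p0 ν l x = 1 := by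
  have h1 : ∑' x : X, pLL p0 ν l x
      = ∑' x : X, (Zpart p0 ν l)⁻¹ * (Real.exp (wdot l ν x) * p0 x) :=
    tsum_congr fun x => by rw [pLL, mul_assoc]
  have h2 : (∑' x : X, Real.exp (wdot l ν x) * p0 x) = Zpart p0 ν l := rfl
  rw [h1, tsum_mul_left, h2, inv_mul_cancel₀ (Zpart_pos p0 hp0 ν hZ).ne']

/-- scaling of `kExp` in the function argument by a constant. -/
lemma kExp_wdot_smul (Yf : X → Y) (p0 : X → ℝ) (ν : Fin n → X → ℕ) (l : Fin n → ℝ)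
    (y : Y) (t : ℝ) (γ : Fin n → ℝ) :
    kExp Yf p0 ν l y (fun x => wdot (t • γ) ν x) = t * kExp Yf p0 ν l y (fun x => wdot γ ν x) := by
  rw [kExp, kExp, ← tsum_mul_left]
  exact tsum_congr fun x => by rw [wdot_smul]; ring

lemma kExp_wdot_zero (Yf : X → Y) (p0 : X → ℝ) (ν : Fin n → X → ℕ) (l : Fin n → ℝ) (y : Y) :
    kExp Yf p0 ν l y (fun x => wdot (0 : Fin n → ℝ) ν x) = 0 := by
  rw [kExp]
  simp [wdot_zero]

/-- structure of `Aaux`: constant part plus `kExp` part. -/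
lemma Aaux_eq (Yf : X → Y) (p0 : X → ℝ) (ν : Fin n → X → ℕ) (𝒴 : Multiset Y)
    (γ l : Fin n → ℝ) :
    Aaux Yf p0 ν 𝒴 γ l =
      (𝒴.card : ℝ) * (1 - pExp p0 ν l (fun x =>
          ∑ i, ((ν i x : ℝ) / (nuSharp ν x : ℝ)) * Real.exp (γ i * (nuSharp ν x : ℝ))))
      + (𝒴.map fun y => kExp Yf p0 ν l y (fun x => wdot γ ν x)).sum := by
  rw [Aaux]
  set C := pExp p0 ν l (fun x =>
      ∑ i, ((ν i x : ℝ) / (nuSharp ν x : ℝ)) * Real.exp (γ i * (nuSharp ν x : ℝ))) with hC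
  have : (𝒴.map fun y => 1 + kExp Yf p0 ν l y (fun x => wdot γ ν x) - C)
      = 𝒴.map fun y => (1 - C) + kExp Yf p0 ν l y (fun x => wdot γ ν x) := by
    exact Multiset.map_congr rfl fun y _ => by ring
  rw [this, Multiset.sum_map_add]
  congr 1
  simp [Multiset.map_const', Multiset.sum_replicate, nsmul_eq_mul]

end basics

section em
variable {X Y : Type*} {n : ℕ}

lemma nonempty_of_pLLY_pos (Yf : X → Y) (p0 : X → ℝ) (ν : Fin n → X → ℕ) (l : Fin n → ℝ)
    {y : Y} (hy : 0 < pLLY Yf p0 ν l y) : Nonempty {x : X // Yf x = y} := by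
  by_contra h
  rw [not_nonempty_iff] at h
  rw [pLLY, tsum_empty] at hy
  exact lt_irrefl 0 hy

lemma summable_pLL_subtype (p0 : X → ℝ) (ν : Fin n → X → ℕ) {l : Fin n → ℝ}
    (hZ : Summable fun x : X => Real.exp (wdot l ν x) * p0 x) (y : Y) (Yf : X → Y) :
    Summable fun x : {x : X // Yf x = y} => pLL p0 ν l x.1 :=
  (summable_pLL p0 ν hZ).subtype _

lemma em_bound [Countable X] (Yf : X → Y) (p0 : X → ℝ) (hp0 : ∀ x, 0 < p0 x)
    (ν : Fin n → X → ℕ) (hν : ∀ x, 1 ≤ nuSharp ν x) (γ l : Fin n → ℝ)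
    (hZl : Summable fun x : X => Real.exp (wdot l ν x) * p0 x)
    (hZg : Summable fun x : X => Real.exp (wdot (γ + l) ν x) * p0 x)
    {y : Y} (hy : 0 < pLLY Yf p0 ν l y)
    (hk : Summable fun x : {x : X // Yf x = y} =>
      (pLL p0 ν l x.1 / pLLY Yf p0 ν l y) * wdot γ ν x.1)
    (hps : Summable fun x : X => pLL p0 ν l x *
      ∑ i, ((ν i x : ℝ) / (nuSharp ν x : ℝ)) * Real.exp (γ i * (nuSharp ν x : ℝ))) :
    1 + kExp Yf p0 ν l y (fun x => wdot γ ν x)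
      - pExp p0 ν l (fun x =>
          ∑ i, ((ν i x : ℝ) / (nuSharp ν x : ℝ)) * Real.exp (γ i * (nuSharp ν x : ℝ)))
    ≤ Real.log (pLLY Yf p0 ν (γ + l) y) - Real.log (pLLY Yf p0 ν l y) := by
  have hne : Nonempty {x : X // Yf x = y} := nonempty_of_pLLY_pos Yf p0 ν l hy
  have hXne : Nonempty X := ⟨hne.some.1⟩
  have hZpos : 0 < Zpart p0 ν l := Zpart_pos p0 hp0 ν hZl
  have hZ'pos : 0 < Zpart p0 ν (γ + l) := Zpart_pos p0 hp0 ν hZg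
  set Z := Zpart p0 ν l with hZdef
  set Z' := Zpart p0 ν (γ + l) with hZ'def
  have hplpos : ∀ x : X, 0 < pLL p0 ν l x := pLL_pos p0 hp0 ν hZl
  have hpgpos : ∀ x : X, 0 < pLL p0 ν (γ + l) x := pLL_pos p0 hp0 ν hZg
  have sply : Summable fun x : {x : X // Yf x = y} => pLL p0 ν l x.1 :=
    summable_pLL_subtype p0 ν hZl y Yf
  have spgy : Summable fun x : {x : X // Yf x = y} => pLL p0 ν (γ + l) x.1 :=
    summable_pLL_subtype p0 ν hZg y Yf
  set ply := pLLY Yf p0 ν l y with hplydef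
  set pgy := pLLY Yf p0 ν (γ + l) y with hpgydef
  have hpgy : 0 < pgy := Summable.tsum_pos spgy (fun x => (hpgpos x.1).le) hne.some (hpgpos _)
  have hrel : ∀ x : X, pLL p0 ν (γ + l) x
      = (Z'⁻¹ * Z * Real.exp (wdot γ ν x)) * pLL p0 ν l x := by
    intro x
    rw [pLL, pLL, ← hZdef, ← hZ'def, wdot_add, Real.exp_add]
    field_simp
  set c := Real.log Z - Real.log Z' with hcdef
  have hrpos : ∀ x : X, 0 < Z'⁻¹ * Z * Real.exp (wdot γ ν x) := by
    intro x; positivity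
  have hlogr : ∀ x : X, Real.log (Z'⁻¹ * Z * Real.exp (wdot γ ν x)) = wdot γ ν x + c := by
    intro x
    rw [Real.log_mul (by positivity) (Real.exp_pos _).ne',
      Real.log_mul (by positivity) hZpos.ne', Real.log_exp, Real.log_inv]
    ring
  set S := pgy / ply with hSdef
  have hSpos : 0 < S := div_pos hpgy hy
  -- pointwise inequality
  have claimA : ∀ x : {x : X // Yf x = y},
      (pLL p0 ν l x.1 / ply) * Real.log (Z'⁻¹ * Z * Real.exp (wdot γ ν x.1))
        - (pLL p0 ν l x.1 / ply) * Real.log S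
      ≤ pLL p0 ν (γ + l) x.1 / pgy - pLL p0 ν l x.1 / ply := by
    intro x
    have hlog := Real.log_le_sub_one_of_pos (div_pos (hrpos x.1) hSpos)
    rw [Real.log_div (hrpos x.1).ne' hSpos.ne'] at hlog
    have hknn : 0 ≤ pLL p0 ν l x.1 / ply := div_nonneg (hplpos x.1).le hy.le
    have := mul_le_mul_of_nonneg_left hlog hknn
    have hident : (pLL p0 ν l x.1 / ply) * ((Z'⁻¹ * Z * Real.exp (wdot γ ν x.1)) / S - 1)
        = pLL p0 ν (γ + l) x.1 / pgy - pLL p0 ν l x.1 / ply := by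
      rw [hrel x.1, hSdef]
      field_simp
    calc (pLL p0 ν l x.1 / ply) * Real.log (Z'⁻¹ * Z * Real.exp (wdot γ ν x.1))
          - (pLL p0 ν l x.1 / ply) * Real.log S
        = (pLL p0 ν l x.1 / ply) *
            (Real.log (Z'⁻¹ * Z * Real.exp (wdot γ ν x.1)) - Real.log S) := by ring
      _ ≤ (pLL p0 ν l x.1 / ply) * ((Z'⁻¹ * Z * Real.exp (wdot γ ν x.1)) / S - 1) := this
      _ = pLL p0 ν (γ + l) x.1 / pgy - pLL p0 ν l x.1 / ply := hident
  -- summability of both sides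
  have sL2 : Summable fun x : {x : X // Yf x = y} => (pLL p0 ν l x.1 / ply) * (c - Real.log S) :=
    (sply.div_const ply).mul_right _
  have sLf : Summable fun x : {x : X // Yf x = y} =>
      (pLL p0 ν l x.1 / ply) * Real.log (Z'⁻¹ * Z * Real.exp (wdot γ ν x.1))
        - (pLL p0 ν l x.1 / ply) * Real.log S := by
    refine (hk.add sL2).congr fun x => ?_
    rw [hlogr x.1]; ring
  have sRf : Summable fun x : {x : X // Yf x = y} =>
      pLL p0 ν (γ + l) x.1 / pgy - pLL p0 ν l x.1 / ply :=
    (spgy.div_const _).sub (sply.div_const _)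
  have htk : (∑' x : {x : X // Yf x = y}, pLL p0 ν l x.1 / ply) = 1 := by
    rw [tsum_div_const]
    have : (∑' x : {x : X // Yf x = y}, pLL p0 ν l x.1) = ply := rfl
    rw [this, div_self hy.ne']
  have htg : (∑' x : {x : X // Yf x = y}, pLL p0 ν (γ + l) x.1 / pgy) = 1 := by
    rw [tsum_div_const]
    have : (∑' x : {x : X // Yf x = y}, pLL p0 ν (γ + l) x.1) = pgy := rfl
    rw [this, div_self hpgy.ne']
  have hsum := Summable.tsum_le_tsum claimA sLf sRf
  have hLval : (∑' x : {x : X // Yf x = y},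
      ((pLL p0 ν l x.1 / ply) * Real.log (Z'⁻¹ * Z * Real.exp (wdot γ ν x.1))
        - (pLL p0 ν l x.1 / ply) * Real.log S))
      = kExp Yf p0 ν l y (fun x => wdot γ ν x) + (c - Real.log S) := by
    have hcong : ∀ x : {x : X // Yf x = y},
        (pLL p0 ν l x.1 / ply) * Real.log (Z'⁻¹ * Z * Real.exp (wdot γ ν x.1))
          - (pLL p0 ν l x.1 / ply) * Real.log S
        = (pLL p0 ν l x.1 / ply) * wdot γ ν x.1
          + (pLL p0 ν l x.1 / ply) * (c - Real.log S) := by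
      intro x; rw [hlogr x.1]; ring
    rw [tsum_congr hcong, Summable.tsum_add hk sL2, tsum_mul_right, htk, one_mul]
    rfl
  have hRval : (∑' x : {x : X // Yf x = y},
      (pLL p0 ν (γ + l) x.1 / pgy - pLL p0 ν l x.1 / ply)) = 0 := by
    rw [Summable.tsum_sub (spgy.div_const _) (sply.div_const _), htg, htk, sub_self]
  rw [hLval, hRval] at hsum
  have hlogS : Real.log S = Real.log pgy - Real.log ply := Real.log_div hpgy.ne' hy.ne'
  have hpart1 : kExp Yf p0 ν l y (fun x => wdot γ ν x) + c
      ≤ Real.log pgy - Real.log ply := by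
    rw [hlogS] at hsum; linarith
  -- part 2 : 1 - pExp ≤ c
  have hE : (∑' x : X, pLL p0 ν l x * Real.exp (wdot γ ν x)) = Z⁻¹ * Z' := by
    have hcong : ∀ x : X, pLL p0 ν l x * Real.exp (wdot γ ν x)
        = Z⁻¹ * (Real.exp (wdot (γ + l) ν x) * p0 x) := by
      intro x; rw [pLL, ← hZdef, wdot_add, Real.exp_add]; ring
    rw [tsum_congr hcong, tsum_mul_left]
    rfl
  have sE : Summable fun x : X => pLL p0 ν l x * Real.exp (wdot γ ν x) := by
    refine (hZg.mul_left Z⁻¹).congr fun x => ?_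
    rw [pLL, ← hZdef, wdot_add, Real.exp_add]; ring
  have hcomp : Z⁻¹ * Z' ≤ pExp p0 ν l (fun x =>
      ∑ i, ((ν i x : ℝ) / (nuSharp ν x : ℝ)) * Real.exp (γ i * (nuSharp ν x : ℝ))) := by
    rw [← hE]
    exact Summable.tsum_le_tsum
      (fun x => mul_le_mul_of_nonneg_left (exp_wdot_le (hν x) γ) (hplpos x).le) sE hps
  have hlogZ : Real.log (Z⁻¹ * Z') = Real.log Z' - Real.log Z := by
    rw [Real.log_mul (by positivity) hZ'pos.ne', Real.log_inv]; ring
  have hpart2 : 1 - pExp p0 ν l (fun x =>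
      ∑ i, ((ν i x : ℝ) / (nuSharp ν x : ℝ)) * Real.exp (γ i * (nuSharp ν x : ℝ))) ≤ c := by
    have := Real.log_le_sub_one_of_pos (mul_pos (inv_pos.2 hZpos) hZ'pos)
    rw [hlogZ] at this
    rw [hcdef]
    linarith
  have : Real.log pgy - Real.log ply = Real.log (pLLY Yf p0 ν (γ + l) y)
      - Real.log (pLLY Yf p0 ν l y) := rfl
  linarith

end em

section more
variable {X Y : Type*} {n : ℕ}

lemma multiset_sum_map_sub (s : Multiset Y) (f g : Y → ℝ) :
    (s.map fun y => f y - g y).sum = (s.map f).sum - (s.map g).sum := by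
  rw [eq_sub_iff_add_eq, ← Multiset.sum_map_add]
  exact congrArg _ (Multiset.map_congr rfl fun y _ => by ring)

lemma Ksum_smul (Yf : X → Y) (p0 : X → ℝ) (ν : Fin n → X → ℕ) (l : Fin n → ℝ)
    (𝒴 : Multiset Y) (t : ℝ) (γ : Fin n → ℝ) :
    (𝒴.map fun y => kExp Yf p0 ν l y (fun x => wdot (t • γ) ν x)).sum
      = t * (𝒴.map fun y => kExp Yf p0 ν l y (fun x => wdot γ ν x)).sum := by
  rw [Multiset.map_congr rfl fun y _ => kExp_wdot_smul Yf p0 ν l y t γ,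
    Multiset.sum_map_mul_left]

lemma Aaux_zero [Nonempty X] (Yf : X → Y) (p0 : X → ℝ) (hp0 : ∀ x, 0 < p0 x)
    (ν : Fin n → X → ℕ) (hν : ∀ x, 1 ≤ nuSharp ν x) (𝒴 : Multiset Y) (l : Fin n → ℝ)
    (hZl : Summable fun x : X => Real.exp (wdot l ν x) * p0 x) :
    Aaux Yf p0 ν 𝒴 (0 : Fin n → ℝ) l = 0 := by
  rw [Aaux_eq]
  have hf0 : pExp p0 ν l (fun x =>
      ∑ i, ((ν i x : ℝ) / (nuSharp ν x : ℝ)) *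
        Real.exp ((0 : Fin n → ℝ) i * (nuSharp ν x : ℝ))) = 1 := by
    have hcong : ∀ x : X, pLL p0 ν l x *
        (∑ i, ((ν i x : ℝ) / (nuSharp ν x : ℝ)) *
          Real.exp ((0 : Fin n → ℝ) i * (nuSharp ν x : ℝ))) = pLL p0 ν l x := by
      intro x
      simp [sum_nubar (hν x)]
    rw [pExp, tsum_congr hcong, tsum_pLL p0 hp0 ν hZl]
  rw [hf0]
  simp only [kExp_wdot_zero]
  simp

/-- concavity (interpolation) inequality for `Aaux` along a segment. -/
lemma Aaux_interp (Yf : X → Y) (p0 : X → ℝ) (hp0 : ∀ x, 0 < p0 x)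
    (ν : Fin n → X → ℕ) (hν : ∀ x, 1 ≤ nuSharp ν x) (𝒴 : Multiset Y) (γ l : Fin n → ℝ)
    (hZl : Summable fun x : X => Real.exp (wdot l ν x) * p0 x)
    {s : ℝ} (hs0 : 0 ≤ s) (hs1 : s ≤ 1)
    (hps1 : Summable fun x : X => pLL p0 ν l x *
      ∑ i, ((ν i x : ℝ) / (nuSharp ν x : ℝ)) * Real.exp ((s • γ) i * (nuSharp ν x : ℝ)))
    (hps2 : Summable fun x : X => pLL p0 ν l x *
      ∑ i, ((ν i x : ℝ) / (nuSharp ν x : ℝ)) * Real.exp (γ i * (nuSharp ν x : ℝ))) :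
    (1 - s) * Aaux Yf p0 ν 𝒴 (0 : Fin n → ℝ) l + s * Aaux Yf p0 ν 𝒴 γ l
      ≤ Aaux Yf p0 ν 𝒴 (s • γ) l := by
  have spl := summable_pLL p0 ν hZl
  have hplnn : ∀ x : X, 0 ≤ pLL p0 ν l x := pLL_nonneg p0 hp0 ν l
  set P1 := ∑' x : X, pLL p0 ν l x with hP1
  set m := ((Multiset.card 𝒴 : ℕ) : ℝ) with hm
  have hm0 : (0:ℝ) ≤ m := by positivity
  set Kγ := (𝒴.map fun y => kExp Yf p0 ν l y (fun x => wdot γ ν x)).sum with hKγ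
  set Eγ := pExp p0 ν l (fun x =>
      ∑ i, ((ν i x : ℝ) / (nuSharp ν x : ℝ)) * Real.exp (γ i * (nuSharp ν x : ℝ))) with hEγ
  set Es := pExp p0 ν l (fun x =>
      ∑ i, ((ν i x : ℝ) / (nuSharp ν x : ℝ)) * Real.exp ((s • γ) i * (nuSharp ν x : ℝ))) with hEs
  -- value at 0
  have hE0 : pExp p0 ν l (fun x =>
      ∑ i, ((ν i x : ℝ) / (nuSharp ν x : ℝ)) *
        Real.exp ((0 : Fin n → ℝ) i * (nuSharp ν x : ℝ))) = P1 := by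
    rw [pExp]
    exact tsum_congr fun x => by simp [sum_nubar (hν x)]
  have hK0 : (𝒴.map fun y => kExp Yf p0 ν l y (fun x => wdot (0 : Fin n → ℝ) ν x)).sum = 0 := by
    simp only [kExp_wdot_zero]
    simp
  -- Es ≤ (1-s) * P1 + s * Eγ
  have hEsle : Es ≤ (1 - s) * P1 + s * Eγ := by
    have hpt : ∀ x : X, pLL p0 ν l x *
        (∑ i, ((ν i x : ℝ) / (nuSharp ν x : ℝ)) * Real.exp ((s • γ) i * (nuSharp ν x : ℝ)))
        ≤ pLL p0 ν l x * ((1 - s) + s *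
          ∑ i, ((ν i x : ℝ) / (nuSharp ν x : ℝ)) * Real.exp (γ i * (nuSharp ν x : ℝ))) :=
      fun x => mul_le_mul_of_nonneg_left (fs_le_interp (hν x) γ hs0 hs1) (hplnn x)
    have sR : Summable fun x : X => pLL p0 ν l x * ((1 - s) + s *
        ∑ i, ((ν i x : ℝ) / (nuSharp ν x : ℝ)) * Real.exp (γ i * (nuSharp ν x : ℝ))) := by
      refine ((spl.mul_left (1 - s)).add (hps2.mul_left s)).congr fun x => ?_
      ring
    have h1 := Summable.tsum_le_tsum hpt hps1 sR
    have h2 : (∑' x : X, pLL p0 ν l x * ((1 - s) + s *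
        ∑ i, ((ν i x : ℝ) / (nuSharp ν x : ℝ)) * Real.exp (γ i * (nuSharp ν x : ℝ))))
        = (1 - s) * P1 + s * Eγ := by
      have hcong : ∀ x : X, pLL p0 ν l x * ((1 - s) + s *
          ∑ i, ((ν i x : ℝ) / (nuSharp ν x : ℝ)) * Real.exp (γ i * (nuSharp ν x : ℝ)))
          = (1 - s) * pLL p0 ν l x + s * (pLL p0 ν l x *
            ∑ i, ((ν i x : ℝ) / (nuSharp ν x : ℝ)) * Real.exp (γ i * (nuSharp ν x : ℝ))) := by
        intro x; ring
      rw [tsum_congr hcong, Summable.tsum_add (spl.mul_left _) (hps2.mul_left _),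
        tsum_mul_left, tsum_mul_left]
      rfl
    rw [h2] at h1
    exact h1
  rw [Aaux_eq, Aaux_eq, Aaux_eq, hE0, hK0, Ksum_smul, ← hKγ, ← hEγ, ← hEs, ← hm]
  have key : m * (1 - ((1 - s) * P1 + s * Eγ)) ≤ m * (1 - Es) :=
    mul_le_mul_of_nonneg_left (by linarith) hm0
  nlinarith [key]

end more

/-- Theorem 4 (equality case): `L(M(λ)) = L(λ)` iff `λ` is a fixed point of `M`
(i.e. `γ = 0` maximizes `A(·,λ)`) iff `λ` is a critical point of `L`. -/
theorem im_step_equality_iff_fixed_iff_critical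
    {X Y : Type*} [Countable X] (Yf : X → Y)
    (p0 : X → ℝ) (hp0 : ∀ x, 0 < p0 x) (hp0sum : ∑' x : X, p0 x = 1)
    {n : ℕ} (ν : Fin n → X → ℕ) (hν : ∀ x, 1 ≤ nuSharp ν x)
    (𝒴 : Multiset Y) (l γh : Fin n → ℝ)
    (hZl : Summable fun x : X => Real.exp (wdot l ν x) * p0 x)
    (hZgh : Summable fun x : X => Real.exp (wdot (γh + l) ν x) * p0 x)
    (hpos : ∀ y ∈ 𝒴, 0 < pLLY Yf p0 ν l y)
    (hmax : ∀ γ : Fin n → ℝ, Aaux Yf p0 ν 𝒴 γ l ≤ Aaux Yf p0 ν 𝒴 γh l)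
    (hksum : ∀ γ : Fin n → ℝ, ∀ y ∈ 𝒴, Summable fun x : {x : X // Yf x = y} =>
      (pLL p0 ν l x.1 / pLLY Yf p0 ν l y) * wdot γ ν x.1)
    (hpsum : ∀ γ : Fin n → ℝ, Summable fun x : X => pLL p0 ν l x *
      ∑ i, ((ν i x : ℝ) / (nuSharp ν x : ℝ)) * Real.exp (γ i * (nuSharp ν x : ℝ)))
    (hderiv : ∀ γ : Fin n → ℝ, ∃ D : ℝ,
      HasDerivAt (fun t : ℝ => Aaux Yf p0 ν 𝒴 (t • γ) l) D 0 ∧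
      HasDerivAt (fun t : ℝ => LL Yf p0 ν 𝒴 (l + t • γ)) D 0) :
    (LL Yf p0 ν 𝒴 (γh + l) = LL Yf p0 ν 𝒴 l ↔
      ∀ γ : Fin n → ℝ, Aaux Yf p0 ν 𝒴 γ l ≤ Aaux Yf p0 ν 𝒴 (0 : Fin n → ℝ) l) ∧
    ((∀ γ : Fin n → ℝ, Aaux Yf p0 ν 𝒴 γ l ≤ Aaux Yf p0 ν 𝒴 (0 : Fin n → ℝ) l) ↔
      ∀ γ : Fin n → ℝ, HasDerivAt (fun t : ℝ => LL Yf p0 ν 𝒴 (l + t • γ)) 0 0) := by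
  
  classical
  by_cases hY : 𝒴 = 0
  · subst hY
    have hAz : ∀ γ' : Fin n → ℝ, Aaux Yf p0 ν 0 γ' l = 0 := by
      intro γ'; simp [Aaux]
    have hLz : ∀ l' : Fin n → ℝ, LL Yf p0 ν 0 l' = 0 := by
      intro l'; simp [LL]
    refine ⟨⟨fun _ γ => by rw [hAz, hAz], fun _ => by rw [hLz, hLz]⟩,
      ⟨fun _ γ => ?_, fun _ γ => by rw [hAz, hAz]⟩⟩
    have hfun : (fun t : ℝ => LL Yf p0 ν 0 (l + t • γ)) = fun _ => (0 : ℝ) :=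
      funext fun t => hLz _
    rw [hfun]
    exact hasDerivAt_const 0 0
  obtain ⟨y0, hy0⟩ := Multiset.exists_mem_of_ne_zero hY
  have hne0 : Nonempty {x : X // Yf x = y0} := nonempty_of_pLLY_pos Yf p0 ν l (hpos y0 hy0)
  haveI hXne : Nonempty X := ⟨hne0.some.1⟩
  have hA0 : Aaux Yf p0 ν 𝒴 (0 : Fin n → ℝ) l = 0 := Aaux_zero Yf p0 hp0 ν hν 𝒴 l hZl
  have spl := summable_pLL p0 ν hZl
  have hplpos : ∀ x : X, 0 < pLL p0 ν l x := pLL_pos p0 hp0 ν hZl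
  have hP1 : (∑' x : X, pLL p0 ν l x) = 1 := tsum_pLL p0 hp0 ν hZl
  have hm : (0:ℝ) < ((Multiset.card 𝒴 : ℕ) : ℝ) := by
    exact_mod_cast Multiset.card_pos.mpr hY
  -- (ii) → (iii)
  have h_ii_iii : (∀ γ : Fin n → ℝ, Aaux Yf p0 ν 𝒴 γ l ≤ Aaux Yf p0 ν 𝒴 (0 : Fin n → ℝ) l) →
      ∀ γ : Fin n → ℝ, HasDerivAt (fun t : ℝ => LL Yf p0 ν 𝒴 (l + t • γ)) 0 0 := by
    intro hii γ
    obtain ⟨D, hA, hL⟩ := hderiv γ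
    have hloc : IsLocalMax (fun t : ℝ => Aaux Yf p0 ν 𝒴 (t • γ) l) 0 :=
      Filter.Eventually.of_forall fun t => by
        simp only [zero_smul]
        exact hii _
    have hD : D = 0 := hloc.hasDerivAt_eq_zero hA
    rwa [hD] at hL
  -- (iii) → (ii)
  have h_iii_ii : (∀ γ : Fin n → ℝ, HasDerivAt (fun t : ℝ => LL Yf p0 ν 𝒴 (l + t • γ)) 0 0) →
      ∀ γ : Fin n → ℝ, Aaux Yf p0 ν 𝒴 γ l ≤ Aaux Yf p0 ν 𝒴 (0 : Fin n → ℝ) l := by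
    intro hiii γ
    obtain ⟨D, hA, hL⟩ := hderiv γ
    have hD : D = 0 := hL.unique (hiii γ)
    rw [hD] at hA
    set g : ℝ → ℝ := fun t => Aaux Yf p0 ν 𝒴 (t • γ) l with hg
    have hg0 : g 0 = Aaux Yf p0 ν 𝒴 (0 : Fin n → ℝ) l := by
      rw [hg]; simp only [zero_smul]
    have hg1 : g 1 = Aaux Yf p0 ν 𝒴 γ l := by
      rw [hg]; simp only [one_smul]
    have hconc : ∀ s : ℝ, 0 < s → s < 1 → g 1 - g 0 ≤ slope g 0 s := by
      intro s hs0 hs1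
      have hint := Aaux_interp Yf p0 hp0 ν hν 𝒴 γ l hZl hs0.le hs1.le
        (hpsum (s • γ)) (hpsum γ)
      have hgs : g s = Aaux Yf p0 ν 𝒴 (s • γ) l := rfl
      have hstep : (g 1 - g 0) * s ≤ g s - g 0 := by
        rw [hgs, hg0, hg1]; nlinarith [hint]
      have hsl : slope g 0 s = (g s - g 0) / s := by
        rw [slope_def_field, sub_zero]
      rw [hsl]
      exact (le_div_iff₀ hs0).2 hstep
    rw [hasDerivAt_iff_tendsto_slope] at hA
    have hmono : 𝓝[>] (0:ℝ) ≤ 𝓝[≠] (0:ℝ) :=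
      nhdsWithin_mono _ fun x hx => ne_of_gt hx
    have hten := hA.mono_left hmono
    have hev : ∀ᶠ s in 𝓝[>] (0:ℝ), g 1 - g 0 ≤ slope g 0 s := by
      filter_upwards [Ioo_mem_nhdsGT_of_mem (show (0:ℝ) ∈ Set.Ico (0:ℝ) 1 by
        constructor <;> norm_num)] with s hs
      exact hconc s hs.1 hs.2
    have hle : g 1 - g 0 ≤ 0 := ge_of_tendsto hten hev
    rw [hg0, hg1] at hle
    linarith
  -- (i) → (ii)
  have h_i_ii : LL Yf p0 ν 𝒴 (γh + l) = LL Yf p0 ν 𝒴 l →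
      ∀ γ : Fin n → ℝ, Aaux Yf p0 ν 𝒴 γ l ≤ Aaux Yf p0 ν 𝒴 (0 : Fin n → ℝ) l := by
    intro hi γ
    have hAh_le : Aaux Yf p0 ν 𝒴 γh l ≤ LL Yf p0 ν 𝒴 (γh + l) - LL Yf p0 ν 𝒴 l := by
      have hpt : ∀ y ∈ 𝒴,
          1 + kExp Yf p0 ν l y (fun x => wdot γh ν x)
            - pExp p0 ν l (fun x =>
                ∑ i, ((ν i x : ℝ) / (nuSharp ν x : ℝ)) * Real.exp (γh i * (nuSharp ν x : ℝ)))
          ≤ Real.log (pLLY Yf p0 ν (γh + l) y) - Real.log (pLLY Yf p0 ν l y) := fun y hy =>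
        em_bound Yf p0 hp0 ν hν γh l hZl hZgh (hpos y hy) (hksum γh y hy) (hpsum γh)
      calc Aaux Yf p0 ν 𝒴 γh l
          ≤ (𝒴.map fun y => Real.log (pLLY Yf p0 ν (γh + l) y)
              - Real.log (pLLY Yf p0 ν l y)).sum :=
            Multiset.sum_map_le_sum_map _ _ hpt
        _ = LL Yf p0 ν 𝒴 (γh + l) - LL Yf p0 ν 𝒴 l := by
            rw [multiset_sum_map_sub]; rfl
    rw [hi, sub_self] at hAh_le
    calc Aaux Yf p0 ν 𝒴 γ l ≤ Aaux Yf p0 ν 𝒴 γh l := hmax γ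
      _ ≤ 0 := hAh_le
      _ = Aaux Yf p0 ν 𝒴 (0 : Fin n → ℝ) l := hA0.symm
  -- (ii) → (i)
  have h_ii_i : (∀ γ : Fin n → ℝ, Aaux Yf p0 ν 𝒴 γ l ≤ Aaux Yf p0 ν 𝒴 (0 : Fin n → ℝ) l) →
      LL Yf p0 ν 𝒴 (γh + l) = LL Yf p0 ν 𝒴 l := by
    intro hii
    have hAh0 : Aaux Yf p0 ν 𝒴 γh l = 0 :=
      le_antisymm (by rw [← hA0]; exact hii γh) (by rw [← hA0]; exact hmax 0)
    rw [Aaux_eq] at hAh0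
    have hh := hii ((1/2 : ℝ) • γh)
    rw [hA0, Aaux_eq, Ksum_smul] at hh
    set m := ((Multiset.card 𝒴 : ℕ) : ℝ) with hmdef
    set K := (𝒴.map fun y => kExp Yf p0 ν l y (fun x => wdot γh ν x)).sum with hKdef
    set E1 := pExp p0 ν l (fun x =>
        ∑ i, ((ν i x : ℝ) / (nuSharp ν x : ℝ)) * Real.exp (γh i * (nuSharp ν x : ℝ))) with hE1
    set Eh := pExp p0 ν l (fun x =>
        ∑ i, ((ν i x : ℝ) / (nuSharp ν x : ℝ)) *
          Real.exp (((1/2 : ℝ) • γh) i * (nuSharp ν x : ℝ))) with hEh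
    have hK' : K = m * E1 - m := by linear_combination hAh0
    have h2 : m * ((1 + E1) / 2) ≤ m * Eh := by nlinarith [hh, hK']
    have hEh_ge : (1 + E1) / 2 ≤ Eh := le_of_mul_le_mul_left h2 hm
    -- pointwise equality
    have hpt : ∀ x : X, pLL p0 ν l x *
        (∑ i, ((ν i x : ℝ) / (nuSharp ν x : ℝ)) *
          Real.exp (((1/2 : ℝ) • γh) i * (nuSharp ν x : ℝ)))
        ≤ pLL p0 ν l x * ((1/2 : ℝ) + (1/2 : ℝ) *
          ∑ i, ((ν i x : ℝ) / (nuSharp ν x : ℝ)) * Real.exp (γh i * (nuSharp ν x : ℝ))) := by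
      intro x
      refine mul_le_mul_of_nonneg_left ?_ (hplpos x).le
      have h3 := fs_le_interp (hν x) γh (by norm_num : (0:ℝ) ≤ 1/2) (by norm_num : (1/2:ℝ) ≤ 1)
      linarith [h3]
    have sL : Summable fun x : X => pLL p0 ν l x *
        (∑ i, ((ν i x : ℝ) / (nuSharp ν x : ℝ)) *
          Real.exp (((1/2 : ℝ) • γh) i * (nuSharp ν x : ℝ))) := hpsum ((1/2 : ℝ) • γh)
    have sR : Summable fun x : X => pLL p0 ν l x * ((1/2 : ℝ) + (1/2 : ℝ) *
        ∑ i, ((ν i x : ℝ) / (nuSharp ν x : ℝ)) * Real.exp (γh i * (nuSharp ν x : ℝ))) := by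
      refine ((spl.mul_left (1/2 : ℝ)).add ((hpsum γh).mul_left (1/2 : ℝ))).congr fun x => ?_
      ring
    have htR : (∑' x : X, pLL p0 ν l x * ((1/2 : ℝ) + (1/2 : ℝ) *
        ∑ i, ((ν i x : ℝ) / (nuSharp ν x : ℝ)) * Real.exp (γh i * (nuSharp ν x : ℝ))))
        = (1 + E1) / 2 := by
      have hcong : ∀ x : X, pLL p0 ν l x * ((1/2 : ℝ) + (1/2 : ℝ) *
          ∑ i, ((ν i x : ℝ) / (nuSharp ν x : ℝ)) * Real.exp (γh i * (nuSharp ν x : ℝ)))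
          = (1/2 : ℝ) * pLL p0 ν l x + (1/2 : ℝ) * (pLL p0 ν l x *
            ∑ i, ((ν i x : ℝ) / (nuSharp ν x : ℝ)) * Real.exp (γh i * (nuSharp ν x : ℝ))) := by
        intro x; ring
      rw [tsum_congr hcong, Summable.tsum_add (spl.mul_left _) ((hpsum γh).mul_left _),
        tsum_mul_left, tsum_mul_left, hP1]
      have hid : (∑' x : X, pLL p0 ν l x *
          ∑ i, ((ν i x : ℝ) / (nuSharp ν x : ℝ)) * Real.exp (γh i * (nuSharp ν x : ℝ))) = E1 := rfl
      rw [hid]; ring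
    have htL : (∑' x : X, pLL p0 ν l x *
        (∑ i, ((ν i x : ℝ) / (nuSharp ν x : ℝ)) *
          Real.exp (((1/2 : ℝ) • γh) i * (nuSharp ν x : ℝ)))) = Eh := rfl
    have hall : ∀ x : X, pLL p0 ν l x *
        (∑ i, ((ν i x : ℝ) / (nuSharp ν x : ℝ)) *
          Real.exp (((1/2 : ℝ) • γh) i * (nuSharp ν x : ℝ)))
        = pLL p0 ν l x * ((1/2 : ℝ) + (1/2 : ℝ) *
          ∑ i, ((ν i x : ℝ) / (nuSharp ν x : ℝ)) * Real.exp (γh i * (nuSharp ν x : ℝ))) := by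
      by_contra hcon
      push_neg at hcon
      obtain ⟨x0, hx0⟩ := hcon
      have hlt := lt_of_le_of_ne (hpt x0) hx0
      have hlt2 := Summable.tsum_lt_tsum hpt hlt sL sR
      rw [htL, htR] at hlt2
      linarith
    -- conclude wdot γh ν x = 0 for all x
    have hwz : ∀ x : X, wdot γh ν x = 0 := by
      intro x
      have hfx : (∑ i, ((ν i x : ℝ) / (nuSharp ν x : ℝ)) *
          Real.exp (((1/2 : ℝ) • γh) i * (nuSharp ν x : ℝ)))
          = (1/2 : ℝ) + (1/2 : ℝ) *
            ∑ i, ((ν i x : ℝ) / (nuSharp ν x : ℝ)) * Real.exp (γh i * (nuSharp ν x : ℝ)) :=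
        mul_left_cancel₀ (hplpos x).ne' (hall x)
      have hptle : ∀ i ∈ Finset.univ, ((ν i x : ℝ) / (nuSharp ν x : ℝ)) *
          Real.exp (((1/2 : ℝ) • γh) i * (nuSharp ν x : ℝ))
          ≤ ((ν i x : ℝ) / (nuSharp ν x : ℝ)) *
            ((1 + Real.exp (γh i * (nuSharp ν x : ℝ))) / 2) := by
        intro i _
        refine mul_le_mul_of_nonneg_left ?_ (nubar_nonneg ν x i)
        have hexp : Real.exp (((1/2 : ℝ) • γh) i * (nuSharp ν x : ℝ)) *
            Real.exp (((1/2 : ℝ) • γh) i * (nuSharp ν x : ℝ))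
            = Real.exp (γh i * (nuSharp ν x : ℝ)) := by
          rw [← Real.exp_add]
          congr 1
          simp only [Pi.smul_apply, smul_eq_mul]
          ring
        nlinarith [sq_nonneg (Real.exp (((1/2 : ℝ) • γh) i * (nuSharp ν x : ℝ)) - 1), hexp]
      have hsum_eq : (∑ i, ((ν i x : ℝ) / (nuSharp ν x : ℝ)) *
          Real.exp (((1/2 : ℝ) • γh) i * (nuSharp ν x : ℝ)))
          = ∑ i, ((ν i x : ℝ) / (nuSharp ν x : ℝ)) *
            ((1 + Real.exp (γh i * (nuSharp ν x : ℝ))) / 2) := by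
        rw [hfx]
        have : ∑ i, ((ν i x : ℝ) / (nuSharp ν x : ℝ)) *
            ((1 + Real.exp (γh i * (nuSharp ν x : ℝ))) / 2)
            = (1/2 : ℝ) * ∑ i, ((ν i x : ℝ) / (nuSharp ν x : ℝ))
            + (1/2 : ℝ) * ∑ i, ((ν i x : ℝ) / (nuSharp ν x : ℝ)) *
              Real.exp (γh i * (nuSharp ν x : ℝ)) := by
          rw [Finset.mul_sum, Finset.mul_sum, ← Finset.sum_add_distrib]
          exact Finset.sum_congr rfl fun i _ => by ring
        rw [this, sum_nubar (hν x)]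
        ring
      have hper := (Finset.sum_eq_sum_iff_of_le hptle).1 hsum_eq
      rw [wdot]
      apply Finset.sum_eq_zero
      intro i _
      by_cases hνi : ν i x = 0
      · simp [hνi]
      · have hw : 0 < (ν i x : ℝ) / (nuSharp ν x : ℝ) :=
          div_pos (by exact_mod_cast Nat.pos_of_ne_zero hνi) (nuSharp_cast_pos (hν x))
        have heq := hper i (Finset.mem_univ i)
        have heq2 : Real.exp (((1/2 : ℝ) • γh) i * (nuSharp ν x : ℝ))
            = (1 + Real.exp (γh i * (nuSharp ν x : ℝ))) / 2 :=
          mul_left_cancel₀ hw.ne' heq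
        have hexp : Real.exp (((1/2 : ℝ) • γh) i * (nuSharp ν x : ℝ)) *
            Real.exp (((1/2 : ℝ) • γh) i * (nuSharp ν x : ℝ))
            = Real.exp (γh i * (nuSharp ν x : ℝ)) := by
          rw [← Real.exp_add]
          congr 1
          simp only [Pi.smul_apply, smul_eq_mul]
          ring
        have hsq : (Real.exp (((1/2 : ℝ) • γh) i * (nuSharp ν x : ℝ)) - 1) ^ 2 = 0 := by
          linear_combination hexp - 2 * heq2
        have hu1 : Real.exp (((1/2 : ℝ) • γh) i * (nuSharp ν x : ℝ)) - 1 = 0 :=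
          (pow_eq_zero_iff two_ne_zero).1 hsq
        have hu2 : Real.exp (((1/2 : ℝ) • γh) i * (nuSharp ν x : ℝ)) = 1 := by linarith
        have hz : ((1/2 : ℝ) • γh) i * (nuSharp ν x : ℝ) = 0 := (Real.exp_eq_one_iff _).1 hu2
        simp only [Pi.smul_apply, smul_eq_mul] at hz
        rcases mul_eq_zero.1 hz with h | h
        · have : γh i = 0 := by linarith
          simp [this]
        · exact absurd h (nuSharp_cast_pos (hν x)).ne'
    have hZeq : Zpart p0 ν (γh + l) = Zpart p0 ν l :=
      tsum_congr fun x => by rw [wdot_add, hwz, zero_add]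
    have hpY : ∀ y : Y, pLLY Yf p0 ν (γh + l) y = pLLY Yf p0 ν l y := fun y =>
      tsum_congr fun x => by rw [pLL, pLL, hZeq, wdot_add, hwz, zero_add]
    rw [LL, LL]
    exact congrArg _ (Multiset.map_congr rfl fun y _ => by rw [hpY])
  exact ⟨⟨h_i_ii, h_ii_i⟩, h_ii_iii, h_iii_ii⟩
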